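/- Let L(λ) be the 2×2 matrix with entries L11 = p2/2 + p1*q1/(2λ), L12 = λ - 2*q2 - q1^2/λ, L21 = a*λ^2 + 2*a*q2*λ + a*(q1^2 + 4*q2^2) + p1^2/(4λ), L22 = -L11. Then for all nonzero λ and all μ, det(L(λ) - μ·Id) = μ^2 - a*λ^3 - H1/4 + H2/λ, where H1 = p1^2 + p2^2 - 16*a*q2*(q1^2 + 2*q2^2) and H2 = a*q1^2*(q1^2 + 4*q2^2) + p1*(q2*p1 - q1*p2)/2. -/

import Mathlib

theorem henon_heiles_lax_charpoly (a q1 q2 p1 p2 lam mu : ℝ) (hl : lam ≠ 0) :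
    let L : Matrix (Fin 2) (Fin 2) ℝ :=
      !![p2 / 2 + p1 * q1 / (2 * lam), lam - 2 * q2 - q1^2 / lam;
         a * lam^2 + 2 * a * q2 * lam + a * (q1^2 + 4 * q2^2) + p1^2 / (4 * lam),
         -(p2 / 2 + p1 * q1 / (2 * lam))]
    let H1 : ℝ := p1^2 + p2^2 - 16 * a * q2 * (q1^2 + 2 * q2^2)
    let H2 : ℝ := a * q1^2 * (q1^2 + 4 * q2^2) + p1 * (q2 * p1 - q1 * p2) / 2
    (L - mu • (1 : Matrix (Fin 2) (Fin 2) ℝ)).det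
      = mu^2 - a * lam^3 - H1 / 4 + H2 / lam := by
  intro L H1 H2
  simp only [L, H1, H2, Matrix.det_fin_two, Matrix.sub_apply, Matrix.smul_apply,
    Matrix.one_apply, Matrix.cons_val', Matrix.cons_val_zero, Matrix.cons_val_one,
    Matrix.head_cons, Matrix.head_fin_const, Matrix.empty_val', Matrix.cons_val_fin_one,
    smul_eq_mul, Matrix.of_apply, zero_ne_one, one_ne_zero, if_true, if_false]
  field_simp
  ring
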